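/- Descent of the penalized coordinate update: suppose ℓ : ℝ → ℝ is twice differentiable with -ℓ''(x)/n ≤ D for all x, D > 0, and let J(x) = -(1/n)ℓ(x) + λ(αω|x| + ((1-α)/2)x²) with λ ≥ 0, α ∈ [0,1], ω ≥ 0. Then the update x₁ = s(D·x₀ + (1/n)ℓ'(x₀), λαω)/(D + λ(1-α)) satisfies J(x₁) ≤ J(x₀). -/

import Mathlib

/-- The soft-thresholding operator `s(a,b) = (|a| - b)₊ · sign(a)`. -/
noncomputable def softThreshold (a b : ℝ) : ℝ := max (|a| - b) 0 * Real.sign a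

/-- The soft-thresholded point minimizes the 1D penalized quadratic. -/
lemma quad_min (A b t x₁ : ℝ) (hA : 0 < A) (ht : 0 ≤ t)
    (hx₁ : x₁ = softThreshold b t / A) (x : ℝ) :
    A / 2 * x₁ ^ 2 - b * x₁ + t * |x₁| ≤ A / 2 * x ^ 2 - b * x + t * |x| := by
  rcases le_or_gt |b| t with h | h
  · have h0 : softThreshold b t = 0 := by
      simp [softThreshold, max_eq_right (by linarith : |b| - t ≤ 0)]
    subst hx₁
    rw [h0]
    have h1 : b * x ≤ t * |x| := by
      calc b * x ≤ |b * x| := le_abs_self _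
        _ = |b| * |x| := abs_mul _ _
        _ ≤ t * |x| := by nlinarith [abs_nonneg x]
    simp only [zero_div, abs_zero]
    nlinarith [sq_nonneg x]
  · have hb : b ≠ 0 := by
      intro hb0; rw [hb0] at h; simp at h; linarith
    rcases lt_or_gt_of_ne hb with hbneg | hbpos
    · -- b < 0, so |b| = -b, sign b = -1, x₁ = (b + t)/A
      have hst : softThreshold b t = b + t := by
        simp [softThreshold, Real.sign_of_neg hbneg, abs_of_neg hbneg,
          max_eq_left (by linarith [abs_of_neg hbneg] : (0:ℝ) ≤ -b - t)]
        ring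
      rw [hst] at hx₁
      have hx₁neg : x₁ < 0 := by
        rw [hx₁]; apply div_neg_of_neg_of_pos _ hA
        have := abs_of_neg hbneg; linarith
      have habs : |x₁| = -x₁ := abs_of_neg hx₁neg
      have hAx₁ : A * x₁ = b + t := by
        rw [hx₁]; field_simp
      rw [habs]
      nlinarith [sq_nonneg (x - x₁), neg_abs_le x, le_abs_self x]
    · -- b > 0, x₁ = (b - t)/A
      have hst : softThreshold b t = b - t := by
        simp [softThreshold, Real.sign_of_pos hbpos, abs_of_pos hbpos,
          max_eq_left (by linarith [abs_of_pos hbpos] : (0:ℝ) ≤ b - t)]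
      rw [hst] at hx₁
      have hx₁pos : 0 < x₁ := by
        rw [hx₁]; apply div_pos _ hA
        have := abs_of_pos hbpos; linarith
      have habs : |x₁| = x₁ := abs_of_pos hx₁pos
      have hAx₁ : A * x₁ = b - t := by
        rw [hx₁]; field_simp
      rw [habs]
      nlinarith [sq_nonneg (x - x₁), neg_abs_le x, le_abs_self x]

/-- Tangent-line inequality for a convex function on ℝ. -/
lemma tangent_le {φ : ℝ → ℝ} (hφ : ConvexOn ℝ Set.univ φ) {x₀ d : ℝ}
    (hd : HasDerivAt φ d x₀) (x : ℝ) : φ x₀ + d * (x - x₀) ≤ φ x := by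
  rcases lt_trichotomy x₀ x with hlt | heq | hgt
  · have := hφ.le_slope_of_hasDerivAt (Set.mem_univ x₀) (Set.mem_univ x) hlt hd
    rw [slope_def_field, le_div_iff₀ (by linarith : (0:ℝ) < x - x₀)] at this
    linarith
  · subst heq; simp
  · have := hφ.slope_le_of_hasDerivAt (Set.mem_univ x) (Set.mem_univ x₀) hgt hd
    rw [slope_def_field, div_le_iff₀ (by linarith : (0:ℝ) < x₀ - x)] at this
    linarith

/-- Descent of the penalized coordinate update (Lemma 1/2 of the paper,
specialized to one coordinate). -/
theorem cmd_update_descent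
    (ℓ ℓ' ℓ'' : ℝ → ℝ) (n : ℕ) (hn : 0 < n) (D : ℝ) (hD : 0 < D)
    (hd1 : ∀ x, HasDerivAt ℓ (ℓ' x) x)
    (hd2 : ∀ x, HasDerivAt ℓ' (ℓ'' x) x)
    (hcurv : ∀ x, -ℓ'' x / (n : ℝ) ≤ D)
    (lam alpha omega : ℝ) (hlam : 0 ≤ lam) (halpha : alpha ∈ Set.Icc (0 : ℝ) 1)
    (homega : 0 ≤ omega)
    (J : ℝ → ℝ)
    (hJ : J = fun x => -(1 / (n : ℝ)) * ℓ x +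
        lam * (alpha * omega * |x| + ((1 - alpha) / 2) * x ^ 2))
    (x₀ x₁ : ℝ)
    (hx₁ : x₁ = softThreshold (D * x₀ + (1 / (n : ℝ)) * ℓ' x₀)
        (lam * alpha * omega) / (D + lam * (1 - alpha))) :
    J x₁ ≤ J x₀ := by
  obtain ⟨hα0, hα1⟩ := halpha
  have hnpos : (0:ℝ) < (n:ℝ) := Nat.cast_pos.mpr hn
  set φ : ℝ → ℝ := fun x => D / 2 * x ^ 2 + (1 / (n:ℝ)) * ℓ x with hφdef
  have hφd : ∀ x, HasDerivAt φ (D * x + (1 / (n:ℝ)) * ℓ' x) x := by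
    intro x
    have h1 : HasDerivAt (fun x : ℝ => D / 2 * x ^ 2) (D * x) x := by
      have := (hasDerivAt_pow 2 x).const_mul (D / 2)
      exact this.congr_deriv (by push_cast; ring)
    exact h1.add ((hd1 x).const_mul _)
  have hφconv : ConvexOn ℝ Set.univ φ := by
    refine convexOn_of_hasDerivWithinAt2_nonneg convex_univ
      (fun x _ => ((hφd x).continuousAt.continuousWithinAt))
      (f' := fun x => D * x + (1 / (n:ℝ)) * ℓ' x)
      (f'' := fun x => D + (1 / (n:ℝ)) * ℓ'' x)
      (fun x _ => (hφd x).hasDerivWithinAt) ?_ ?_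
    · intro x _
      have h1 : HasDerivAt (fun y : ℝ => D * y) D x := by
        simpa using (hasDerivAt_id x).const_mul D
      exact (h1.add ((hd2 x).const_mul _)).hasDerivWithinAt
    · intro x _
      show 0 ≤ D + 1 / (n:ℝ) * ℓ'' x
      have h5 := hcurv x
      have h4 : -ℓ'' x / (n:ℝ) = -(1 / (n:ℝ) * ℓ'' x) := by ring
      rw [h4] at h5
      linarith
  -- Tangent bound: for all x, -(1/n) ℓ x ≤ -(1/n) ℓ x₀ - (1/n) ℓ' x₀ * (x - x₀) + D/2 * (x - x₀)^2
  have htan : ∀ x, -(1 / (n:ℝ)) * ℓ x ≤ -(1 / (n:ℝ)) * ℓ x₀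
      - (1 / (n:ℝ)) * ℓ' x₀ * (x - x₀) + D / 2 * (x - x₀) ^ 2 := by
    intro x
    have := tangent_le hφconv (hφd x₀) x
    simp only [hφdef] at this
    nlinarith [this]
  -- Set up the quadratic minimization
  set A := D + lam * (1 - alpha) with hA
  set b := D * x₀ + (1 / (n:ℝ)) * ℓ' x₀ with hb
  set t := lam * alpha * omega with ht
  have hApos : 0 < A := by nlinarith
  have htnn : 0 ≤ t := by positivity
  have hmin := quad_min A b t x₁ hApos htnn hx₁ x₀
  -- Surrogate Q(x) = -(1/n)ℓ(x₀) - (1/n)ℓ'(x₀)(x-x₀) + D/2 (x-x₀)² + penalty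
  -- J x₁ ≤ Q x₁ ≤ Q x₀ = J x₀
  rw [hJ]
  simp only
  have h1 := htan x₁
  rw [hA, hb, ht] at hmin
  linarith [hmin, h1]
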